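/- For any vertex u in a non-terminal set F of a connected weighted graph, the minimum energy needed to route one unit of flow from u to the terminal set T according to the hitting-probability distribution {(P·1_u)(v)}_{v∈T} equals (1_u − P·1_u)^T · L^† · (1_u − P·1_u), where P is the projection matrix [−L_TF·L_FF^{-1}, I_T] extended by zeros to an n-dimensional vector. -/

import Mathlib

open Matrix BigOperators

/-- The Laplacian matrix of a weighted graph given by a weight function `w`. -/
def lap {V : Type*} [Fintype V] [DecidableEq V] (w : V → V → ℝ) : Matrix V V ℝ :=
  Matrix.diagonal (fun i => ∑ k, w i k) - Matrix.of w

/-- `B` is the Moore–Penrose pseudoinverse of `A`. -/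
def IsMoorePenrose {n : Type*} [Fintype n] (A B : Matrix n n ℝ) : Prop :=
  A * B * A = A ∧ B * A * B = B ∧ (A * B)ᵀ = A * B ∧ (B * A)ᵀ = B * A

set_option linter.unusedSectionVars false

section ThomsonAux

variable {V : Type*} [Fintype V] [DecidableEq V] [Nonempty V]

lemma lap_apply (w : V → V → ℝ) (i j : V) :
    lap w i j = (if i = j then ∑ k, w i k else 0) - w i j := by
  simp [lap, Matrix.diagonal_apply, Matrix.sub_apply]

lemma lap_symm_entry (w : V → V → ℝ) (hsymm : ∀ a b, w a b = w b a) (i j : V) :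
    lap w i j = lap w j i := by
  rcases eq_or_ne i j with rfl | h
  · rfl
  · simp [lap_apply, h, h.symm, hsymm i j]

lemma lap_rowsum (w : V → V → ℝ) (i : V) : ∑ j, lap w i j = 0 := by
  simp [lap_apply, Finset.sum_sub_distrib, Finset.sum_ite_eq]

lemma lap_colsum (w : V → V → ℝ) (hsymm : ∀ a b, w a b = w b a) (j : V) :
    ∑ i, lap w i j = 0 := by
  rw [← lap_rowsum w j]
  exact Finset.sum_congr rfl fun i _ => lap_symm_entry w hsymm i j

lemma col_sum_flow (d : V → ℝ) (f : V → V → ℝ) (hfa : ∀ a b, f a b = - f b a)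
    (hfd : ∀ a, ∑ b, f a b = d a) (b : V) : ∑ a, f a b = - d b := by
  rw [← hfd b, ← Finset.sum_neg_distrib]
  exact Finset.sum_congr rfl fun a _ => hfa a b

lemma sum_comb (c : ℝ) (X Y Z : V → ℝ) :
    ∑ b, (X b + c * Y b + Z b) = (∑ b, X b) + c * (∑ b, Y b) + ∑ b, Z b := by
  rw [Finset.sum_add_distrib, Finset.sum_add_distrib, Finset.mul_sum]

theorem thomson
    (w : V → V → ℝ)
    (hsymm : ∀ a b, w a b = w b a) (hnonneg : ∀ a b, 0 ≤ w a b)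
    (hconn : ∀ x : V → ℝ, (lap w) *ᵥ x = 0 → ∃ c, ∀ v, x v = c)
    (Ldag : Matrix V V ℝ) (hLdag : IsMoorePenrose (lap w) Ldag)
    (d : V → ℝ) (hd : ∑ v, d v = 0) :
    sInf {En : ℝ | ∃ f : V → V → ℝ,
          (∀ a b, f a b = - f b a) ∧
          (∀ a b, w a b = 0 → f a b = 0) ∧
          (∀ a, ∑ b, f a b = d a) ∧
          En = (1/2) * ∑ a, ∑ b, (if w a b = 0 then 0 else (f a b)^2 / w a b)}
      = d ⬝ᵥ (Ldag *ᵥ d) := by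
  set L := lap w with hL
  have hsymL : Lᵀ = L := by
    ext i j; exact lap_symm_entry w hsymm j i
  set φ : V → ℝ := Ldag *ᵥ d with hφ
  have hLLdag : L * (L * Ldag) = L := by
    have h1 := hLdag.1
    have h3 := hLdag.2.2.1
    calc L * (L * Ldag) = Lᵀ * (L * Ldag)ᵀ := by rw [hsymL, h3]
      _ = ((L * Ldag) * L)ᵀ := by rw [← Matrix.transpose_mul]
      _ = Lᵀ := by rw [h1]
      _ = L := hsymL
  have hLφ : L *ᵥ φ = d := by
    have hker : L *ᵥ (L *ᵥ φ - d) = 0 := by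
      have h2 : L *ᵥ (L *ᵥ φ) = L *ᵥ d := by
        rw [hφ, Matrix.mulVec_mulVec, Matrix.mulVec_mulVec, Matrix.mul_assoc L L Ldag, hLLdag]
      rw [Matrix.mulVec_sub, h2, sub_self]
    obtain ⟨c, hc⟩ := hconn _ hker
    have hsum0 : ∑ v, (L *ᵥ φ - d) v = 0 := by
      have h1 : ∑ v, (L *ᵥ φ) v = 0 := by
        simp only [Matrix.mulVec, dotProduct]
        rw [Finset.sum_comm]
        simp only [← Finset.sum_mul]
        simp [hL, lap_colsum w hsymm]
      simp [Finset.sum_sub_distrib, h1, hd]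
    have hc0 : c = 0 := by
      have heq : ∑ v : V, (L *ᵥ φ - d) v = (Fintype.card V : ℝ) * c := by
        simp [hc, Finset.sum_const, mul_comm]
      rw [heq] at hsum0
      have hcard : (Fintype.card V : ℝ) ≠ 0 := by
        exact_mod_cast Fintype.card_ne_zero
      exact (mul_eq_zero.mp hsum0).resolve_left hcard
    funext v
    have hv : (L *ᵥ φ) v - d v = 0 := by rw [← hc0]; exact hc v
    linarith
  set fs : V → V → ℝ := fun a b => w a b * (φ a - φ b) with hfs
  have hfs_anti : ∀ a b, fs a b = - fs b a := by
    intro a b; simp only [hfs]; rw [hsymm a b]; ring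
  have hfs_zero : ∀ a b, w a b = 0 → fs a b = 0 := by
    intro a b h; simp [hfs, h]
  have hLrow : ∀ a, ∑ b, (((if a = b then ∑ k, w a k else 0) - w a b) * φ b)
      = (∑ k, w a k) * φ a - ∑ b, w a b * φ b := by
    intro a
    simp only [sub_mul]
    rw [Finset.sum_sub_distrib]
    congr 1
    simp [ite_mul, Finset.sum_ite_eq]
  have hfs_div : ∀ a, ∑ b, fs a b = d a := by
    intro a
    have h := congrFun hLφ a
    rw [← h]
    simp only [Matrix.mulVec, dotProduct, hL, lap_apply]
    rw [hLrow a]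
    simp only [hfs, mul_sub]
    rw [Finset.sum_sub_distrib, ← Finset.sum_mul]
  have hEterm : ∀ a b, (if w a b = 0 then 0 else (fs a b)^2 / w a b) = w a b * (φ a - φ b)^2 := by
    intro a b
    by_cases h : w a b = 0
    · simp [h]
    · simp only [h, if_false, hfs]
      field_simp
  have hEstar : (1/2) * (∑ a, ∑ b, (if w a b = 0 then 0 else (fs a b)^2 / w a b))
      = d ⬝ᵥ (Ldag *ᵥ d) := by
    have h1 : ∑ a, ∑ b, (if w a b = 0 then 0 else (fs a b)^2 / w a b)
        = ∑ a, ∑ b, w a b * (φ a - φ b)^2 :=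
      Finset.sum_congr rfl fun a _ => Finset.sum_congr rfl fun b _ => hEterm a b
    have hS3 : ∑ a, ∑ b, w a b * φ b ^ 2 = ∑ a, ∑ b, w a b * φ a ^ 2 := by
      rw [Finset.sum_comm]
      exact Finset.sum_congr rfl fun a _ => Finset.sum_congr rfl fun b _ => by rw [hsymm]
    have hRHS : d ⬝ᵥ (Ldag *ᵥ d) = φ ⬝ᵥ d := dotProduct_comm _ _
    have hsplit2 : ∑ a, ∑ b, w a b * (φ a - φ b)^2
        = (∑ a, ∑ b, w a b * φ a ^ 2) + (-2) * (∑ a, ∑ b, w a b * (φ a * φ b))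
          + ∑ a, ∑ b, w a b * φ b ^ 2 := by
      rw [← sum_comb]
      refine Finset.sum_congr rfl fun a _ => ?_
      rw [← sum_comb]
      exact Finset.sum_congr rfl fun b _ => by ring
    have hS12 : ∀ a, (∑ b, w a b * φ a ^ 2) - (∑ b, w a b * (φ a * φ b))
        = φ a * ∑ b, (((if a = b then ∑ k, w a k else 0) - w a b) * φ b) := by
      intro a
      rw [hLrow a, mul_sub]
      congr 1
      · rw [← Finset.sum_mul]; ring
      · rw [Finset.mul_sum]
        exact Finset.sum_congr rfl fun b _ => by ring
    rw [h1, hRHS, ← hLφ]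
    simp only [dotProduct, Matrix.mulVec, hL, lap_apply]
    calc (1/2) * ∑ a, ∑ b, w a b * (φ a - φ b)^2
        = (∑ a, ∑ b, w a b * φ a ^ 2) - ∑ a, ∑ b, w a b * (φ a * φ b) := by
          rw [hsplit2, hS3]; ring
      _ = ∑ a, φ a * ∑ b, (((if a = b then ∑ k, w a k else 0) - w a b) * φ b) := by
          rw [← Finset.sum_sub_distrib]
          refine Finset.sum_congr rfl fun a _ => ?_
          exact hS12 a
  -- lower bound
  have hlow : ∀ En ∈ {En : ℝ | ∃ f : V → V → ℝ,
          (∀ a b, f a b = - f b a) ∧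
          (∀ a b, w a b = 0 → f a b = 0) ∧
          (∀ a, ∑ b, f a b = d a) ∧
          En = (1/2) * ∑ a, ∑ b, (if w a b = 0 then 0 else (f a b)^2 / w a b)},
      d ⬝ᵥ (Ldag *ᵥ d) ≤ En := by
    rintro En ⟨f, hfa, hf0, hfd, rfl⟩
    rw [← hEstar]
    have hterm : ∀ a b, (if w a b = 0 then 0 else (f a b)^2 / w a b)
        = (if w a b = 0 then 0 else (fs a b)^2 / w a b)
          + 2 * ((φ a - φ b) * (f a b - fs a b))
          + (if w a b = 0 then 0 else (f a b - fs a b)^2 / w a b) := by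
      intro a b
      by_cases h : w a b = 0
      · simp [h, hf0 a b h, hfs_zero a b h]
      · simp only [h, if_false, hfs]
        field_simp
        ring
    have hcross : ∑ a, ∑ b, (φ a - φ b) * (f a b - fs a b) = 0 := by
      have hsplit : ∀ a b, (φ a - φ b) * (f a b - fs a b)
          = φ a * (f a b - fs a b) - φ b * (f a b - fs a b) := fun a b => by ring
      have e1 : ∑ a, ∑ b, φ a * (f a b - fs a b) = 0 := by
        refine Finset.sum_eq_zero fun a _ => ?_
        rw [← Finset.mul_sum, Finset.sum_sub_distrib, hfd a, hfs_div a, sub_self, mul_zero]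
      have e2 : ∑ a, ∑ b, φ b * (f a b - fs a b) = 0 := by
        rw [Finset.sum_comm]
        refine Finset.sum_eq_zero fun b _ => ?_
        rw [← Finset.mul_sum, Finset.sum_sub_distrib,
          col_sum_flow d f hfa hfd b, col_sum_flow d fs hfs_anti hfs_div b, sub_self, mul_zero]
      calc ∑ a, ∑ b, (φ a - φ b) * (f a b - fs a b)
          = ∑ a, ∑ b, (φ a * (f a b - fs a b) - φ b * (f a b - fs a b)) := by
            exact Finset.sum_congr rfl fun a _ => Finset.sum_congr rfl fun b _ => hsplit a b
        _ = (∑ a, ∑ b, φ a * (f a b - fs a b)) - ∑ a, ∑ b, φ b * (f a b - fs a b) := by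
            rw [← Finset.sum_sub_distrib]
            exact Finset.sum_congr rfl fun a _ => by rw [Finset.sum_sub_distrib]
        _ = 0 := by rw [e1, e2, sub_self]
    have hquad : 0 ≤ ∑ a, ∑ b, (if w a b = 0 then 0 else (f a b - fs a b)^2 / w a b) := by
      refine Finset.sum_nonneg fun a _ => Finset.sum_nonneg fun b _ => ?_
      by_cases h : w a b = 0
      · simp [h]
      · simp only [h, if_false]
        exact div_nonneg (sq_nonneg _) (hnonneg a b)
    have hsum : ∑ a, ∑ b, (if w a b = 0 then 0 else (f a b)^2 / w a b)
        = (∑ a, ∑ b, (if w a b = 0 then 0 else (fs a b)^2 / w a b))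
          + 2 * (∑ a, ∑ b, (φ a - φ b) * (f a b - fs a b))
          + ∑ a, ∑ b, (if w a b = 0 then 0 else (f a b - fs a b)^2 / w a b) := by
      rw [← sum_comb]
      refine Finset.sum_congr rfl fun a _ => ?_
      rw [← sum_comb]
      exact Finset.sum_congr rfl fun b _ => hterm a b
    rw [hsum, hcross]
    linarith
  have hmem : d ⬝ᵥ (Ldag *ᵥ d) ∈ {En : ℝ | ∃ f : V → V → ℝ,
          (∀ a b, f a b = - f b a) ∧
          (∀ a b, w a b = 0 → f a b = 0) ∧
          (∀ a, ∑ b, f a b = d a) ∧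
          En = (1/2) * ∑ a, ∑ b, (if w a b = 0 then 0 else (f a b)^2 / w a b)} :=
    ⟨fs, hfs_anti, hfs_zero, hfs_div, hEstar.symm⟩
  exact le_antisymm (csInf_le ⟨_, hlow⟩ hmem) (le_csInf ⟨_, hmem⟩ hlow)

end ThomsonAux
/-- the minimum energy needed to route one unit of flow from `u ∈ F` to
the terminal set `T` according to the hitting-probability distribution `P·1_u`
equals `(1_u − P·1_u)ᵀ L† (1_u − P·1_u)`. -/
theorem min_energy_to_terminals
    {F T : Type*} [Fintype F] [Fintype T] [DecidableEq F] [DecidableEq T]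
    [Nonempty T]
    (w : F ⊕ T → F ⊕ T → ℝ)
    (hsymm : ∀ a b, w a b = w b a) (hnonneg : ∀ a b, 0 ≤ w a b)
    (hconn : ∀ x : F ⊕ T → ℝ, (lap w) *ᵥ x = 0 → ∃ c, ∀ v, x v = c)
    (hFF : IsUnit ((lap w).toBlocks₁₁).det)
    (Ldag : Matrix (F ⊕ T) (F ⊕ T) ℝ) (hLdag : IsMoorePenrose (lap w) Ldag)
    (u : F) :
    -- the demand vector `1_u − P·1_u`, with `P·1_u` (supported on `T`) extended by zeros
    (fun d : F ⊕ T → ℝ =>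
      sInf {En : ℝ | ∃ f : (F ⊕ T) → (F ⊕ T) → ℝ,
          (∀ a b, f a b = - f b a) ∧
          (∀ a b, w a b = 0 → f a b = 0) ∧
          (∀ a, ∑ b, f a b = d a) ∧
          En = (1/2) * ∑ a, ∑ b, (if w a b = 0 then 0 else (f a b)^2 / w a b)}
        = d ⬝ᵥ (Ldag *ᵥ d))
      ((Pi.single (Sum.inl u) 1 : F ⊕ T → ℝ)
        - Sum.elim (0 : F → ℝ)
            ((Matrix.fromCols (-((lap w).toBlocks₂₁ * ((lap w).toBlocks₁₁)⁻¹)) 1)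
              *ᵥ (Pi.single (Sum.inl u) 1 : F ⊕ T → ℝ))) := by
  refine thomson w hsymm hnonneg hconn Ldag hLdag _ ?_
  set L := lap w with hLdef
  set A : Matrix T F ℝ := L.toBlocks₂₁ * (L.toBlocks₁₁)⁻¹ with hA
  have hMe : ∀ t : T,
      ((Matrix.fromCols (-A) 1) *ᵥ (Pi.single (Sum.inl u) 1 : F ⊕ T → ℝ)) t
        = -(A t u) := by
    intro t
    simp only [Matrix.mulVec, dotProduct, Pi.single_apply, mul_ite, mul_one, mul_zero,
      Finset.sum_ite_eq']
    try simp [Matrix.fromCols_apply_inl]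
    try rfl
  have hAsum : ∑ t, A t u = -1 := by
    have hinv : L.toBlocks₁₁ * (L.toBlocks₁₁)⁻¹ = 1 := Matrix.mul_nonsing_inv _ hFF
    have hcolT : ∀ f : F, ∑ t, L.toBlocks₂₁ t f = - ∑ f', L.toBlocks₁₁ f' f := by
      intro f
      have h0 := lap_colsum w hsymm (Sum.inl f)
      rw [Fintype.sum_sum_type] at h0
      have e1 : ∀ f' : F, lap w (Sum.inl f') (Sum.inl f) = L.toBlocks₁₁ f' f := fun _ => rfl
      have e2 : ∀ t : T, lap w (Sum.inr t) (Sum.inl f) = L.toBlocks₂₁ t f := fun _ => rfl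
      simp only [e1, e2] at h0
      linarith
    calc ∑ t, A t u = ∑ t, ∑ f, L.toBlocks₂₁ t f * (L.toBlocks₁₁)⁻¹ f u := by
          exact Finset.sum_congr rfl fun t _ => by rw [hA, Matrix.mul_apply]
      _ = ∑ f, (∑ t, L.toBlocks₂₁ t f) * (L.toBlocks₁₁)⁻¹ f u := by
          rw [Finset.sum_comm]
          exact Finset.sum_congr rfl fun f _ => by rw [Finset.sum_mul]
      _ = - ∑ f, (∑ f', L.toBlocks₁₁ f' f) * (L.toBlocks₁₁)⁻¹ f u := by
          rw [← Finset.sum_neg_distrib]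
          exact Finset.sum_congr rfl fun f _ => by rw [hcolT f]; ring
      _ = - ∑ f', (L.toBlocks₁₁ * (L.toBlocks₁₁)⁻¹) f' u := by
          congr 1
          calc ∑ f, (∑ f', L.toBlocks₁₁ f' f) * (L.toBlocks₁₁)⁻¹ f u
              = ∑ f, ∑ f', L.toBlocks₁₁ f' f * (L.toBlocks₁₁)⁻¹ f u :=
                Finset.sum_congr rfl fun f _ => Finset.sum_mul _ _ _
            _ = ∑ f', ∑ f, L.toBlocks₁₁ f' f * (L.toBlocks₁₁)⁻¹ f u := Finset.sum_comm
            _ = ∑ f', (L.toBlocks₁₁ * (L.toBlocks₁₁)⁻¹) f' u :=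
                Finset.sum_congr rfl fun f' _ => (Matrix.mul_apply).symm
      _ = -1 := by
          rw [hinv]
          simp [Matrix.one_apply]
  simp only [Pi.sub_apply]
  rw [Finset.sum_sub_distrib]
  have h1 : ∑ v : F ⊕ T, (Pi.single (Sum.inl u) 1 : F ⊕ T → ℝ) v = 1 :=
    Finset.sum_pi_single' (Sum.inl u) 1 Finset.univ |>.trans (by simp)
  have h2 : ∑ v : F ⊕ T, Sum.elim (0 : F → ℝ)
      ((Matrix.fromCols (-A) 1) *ᵥ (Pi.single (Sum.inl u) 1 : F ⊕ T → ℝ)) v = 1 := by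
    rw [Fintype.sum_sum_type]
    simp only [Sum.elim_inl, Sum.elim_inr, Pi.zero_apply, Finset.sum_const_zero, zero_add]
    rw [Finset.sum_congr rfl fun t _ => hMe t]
    rw [Finset.sum_neg_distrib, hAsum]
    ring
  rw [h1, h2, sub_self]
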